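/- Let φ : 𝒫_c → 𝒫_c preserve the transition probability in M_n(ℂ) with 5c/2 ≤ n. If P, Q ∈ 𝒫_c commute, then φ(P) and φ(Q) commute. -/

import Mathlib

/-- `𝒫_c`: projections of trace `c` in `M_n(ℂ)`. -/
def MemGrassmann (n c : ℕ) (P : Matrix (Fin n) (Fin n) ℂ) : Prop :=
  P.IsHermitian ∧ P * P = P ∧ P.trace = (c : ℂ)

namespace Stmt13Aux

open Matrix

variable {N : ℕ}

lemma eq_zero_of_trace_conjTranspose {A : Matrix (Fin N) (Fin N) ℂ}
    (h : (Aᴴ * A).trace = 0) : A = 0 := by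
  have h2 : ∑ j, ∑ i, (Complex.normSq (A i j) : ℂ) = 0 := by
    rw [← h]
    simp [Matrix.trace, Matrix.diag, Matrix.mul_apply, Matrix.conjTranspose_apply,
      Complex.normSq_eq_conj_mul_self]
  have h3 : ∑ j, ∑ i, Complex.normSq (A i j) = 0 := by exact_mod_cast h2
  ext i j
  have h4 := (Finset.sum_eq_zero_iff_of_nonneg (fun j _ => Finset.sum_nonneg
    (fun i _ => Complex.normSq_nonneg (A i j)))).mp h3 j (Finset.mem_univ j)
  have h5 := (Finset.sum_eq_zero_iff_of_nonneg
    (fun i _ => Complex.normSq_nonneg (A i j))).mp h4 i (Finset.mem_univ i)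
  simpa using Complex.normSq_eq_zero.mp h5

lemma herm_idem_trace_zero {H : Matrix (Fin N) (Fin N) ℂ}
    (hH : Hᴴ = H) (hH2 : H*H = H) (ht : H.trace = 0) : H = 0 :=
  eq_zero_of_trace_conjTranspose (by rw [hH, hH2, ht])

lemma lemA {A F : Matrix (Fin N) (Fin N) ℂ}
    (hA : Aᴴ = A) (hA2 : A*A = A) (hF : Fᴴ = F) (hF2 : F*F = F)
    (h : (A*F).trace = 0) : A*F = 0 ∧ F*A = 0 := by
  have key : A*F = 0 := by
    apply eq_zero_of_trace_conjTranspose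
    have e1 : (A*F)ᴴ * (A*F) = F*(A*F) := by
      rw [conjTranspose_mul, hA, hF, mul_assoc, ← mul_assoc A A F, hA2]
    rw [e1, trace_mul_comm, mul_assoc, hF2, h]
  refine ⟨key, ?_⟩
  have e2 : (A*F)ᴴ = F*A := by rw [conjTranspose_mul, hA, hF]
  rw [← e2, key, conjTranspose_zero]

lemma lemB {B G : Matrix (Fin N) (Fin N) ℂ}
    (hB : Bᴴ = B) (hB2 : B*B = B) (hG : Gᴴ = G) (hG2 : G*G = G)
    (h : (B*G).trace = B.trace) : B*G = B ∧ G*B = B := by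
  have hG' : (1 - G)ᴴ = 1 - G := by rw [conjTranspose_sub, conjTranspose_one, hG]
  have hG2' : (1 - G)*(1 - G) = 1 - G := by
    simp only [mul_sub, sub_mul, mul_one, one_mul, hG2]
    abel
  have h0 : (B*(1-G)).trace = 0 := by
    rw [mul_sub, mul_one, trace_sub, h, sub_self]
  have hz := (lemA hB hB2 hG' hG2' h0).1
  rw [mul_sub, mul_one, sub_eq_zero] at hz
  refine ⟨hz.symm, ?_⟩
  have : (B*G)ᴴ = G*B := by rw [conjTranspose_mul, hB, hG]
  rw [← this, ← hz, hB]

lemma swap_zero {A B : Matrix (Fin N) (Fin N) ℂ}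
    (hA : Aᴴ = A) (hB : Bᴴ = B) (h : A*B = 0) : B*A = 0 := by
  have := congrArg conjTranspose h
  rwa [conjTranspose_mul, hA, hB, conjTranspose_zero] at this

lemma lemC {A B F : Matrix (Fin N) (Fin N) ℂ}
    (hA : Aᴴ = A) (hB : Bᴴ = B) (hA2 : A*A = A) (hB2 : B*B = B) (hF2 : F*F = F)
    (h1 : A*F = A*B) (h2 : F*A = B*A) (h3 : B*F = B*A) (h4 : F*B = A*B) :
    A*B = B*A := by
  have hCF : (A - B) * F = A*B - B*A := by rw [sub_mul, h1, h3]
  have hFC : F * (A - B) = B*A - A*B := by rw [mul_sub, h2, h4]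
  have hKconj : (A*B - B*A)ᴴ = B*A - A*B := by
    rw [conjTranspose_sub, conjTranspose_mul, conjTranspose_mul, hA, hB]
  have hmain : (A*B - B*A)ᴴ * (A*B - B*A) = F * ((A-B)*(A-B)) * F := by
    rw [hKconj, ← hFC, ← hCF, mul_assoc, ← mul_assoc (A-B) (A-B) F, mul_assoc F]
  have htr : ((A*B - B*A)ᴴ * (A*B - B*A)).trace = 0 := by
    rw [hmain]
    have e1 : (F * ((A-B)*(A-B)) * F).trace = (((A-B)*(A-B)) * F).trace := by
      rw [trace_mul_cycle, hF2, trace_mul_comm]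
    rw [e1]
    have e2 : (A-B)*(A-B) = A + B - A*B - B*A := by
      simp only [mul_sub, sub_mul, hA2, hB2]
      abel
    rw [e2]
    simp only [sub_mul, add_mul, trace_sub, trace_add]
    have e3 : (A*B*F).trace = (A*B).trace := by
      rw [mul_assoc, h3, ← mul_assoc, trace_mul_cycle, hA2]
    have e4 : (B*A*F).trace = (B*A).trace := by
      rw [mul_assoc, h1, ← mul_assoc, trace_mul_cycle, hB2]
    have e5 : (A*F).trace = (A*B).trace := by rw [h1]
    have e6 : (B*F).trace = (B*A).trace := by rw [h3]
    rw [e3, e4, e5, e6]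
    ring
  have := eq_zero_of_trace_conjTranspose htr
  rwa [sub_eq_zero] at this

lemma sum_identity {A B F₁ F₂ : Matrix (Fin N) (Fin N) ℂ} {t u v : ℂ}
    (hA : Aᴴ = A) (hB : Bᴴ = B) (hF₁ : F₁ᴴ = F₁) (hF₂ : F₂ᴴ = F₂)
    (hA2 : A*A = A) (hB2 : B*B = B) (hF₁2 : F₁*F₁ = F₁) (hF₂2 : F₂*F₂ = F₂)
    (htA : A.trace = t) (htB : B.trace = t) (htF₁ : F₁.trace = t) (htF₂ : F₂.trace = t)
    (hAF₁ : (A*F₁).trace = 0) (hBF₂ : (B*F₂).trace = 0)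
    (hAB : (A*B).trace = u) (hBF₁ : (B*F₁).trace = v)
    (hAF₂ : (A*F₂).trace = v) (hF₁F₂ : (F₁*F₂).trace = u)
    (huv : u + v = t) :
    A + F₁ = B + F₂ := by
  obtain ⟨hAF₁z, hF₁Az⟩ := lemA hA hA2 hF₁ hF₁2 hAF₁
  obtain ⟨hBF₂z, hF₂Bz⟩ := lemA hB hB2 hF₂ hF₂2 hBF₂
  set G := A + F₁ with hGdef
  have hG : Gᴴ = G := by rw [hGdef, conjTranspose_add, hA, hF₁]
  have hG2 : G*G = G := by
    rw [hGdef]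
    simp only [mul_add, add_mul, hA2, hF₁2, hAF₁z, hF₁Az]
    abel
  have htG : G.trace = t + t := by rw [hGdef, trace_add, htA, htF₁]
  have hBG : B*G = B ∧ G*B = B := by
    apply lemB hB hB2 hG hG2
    rw [hGdef, mul_add, trace_add, trace_mul_comm, hAB, hBF₁, huv, htB]
  have hFG : F₂*G = F₂ ∧ G*F₂ = F₂ := by
    apply lemB hF₂ hF₂2 hG hG2
    rw [hGdef, mul_add, trace_add, trace_mul_comm F₂ A, trace_mul_comm F₂ F₁,
      hAF₂, hF₁F₂, htF₂]
    linear_combination huv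
  have hH : (G - B - F₂)ᴴ = G - B - F₂ := by
    rw [conjTranspose_sub, conjTranspose_sub, hG, hB, hF₂]
  have hH2 : (G - B - F₂)*(G - B - F₂) = G - B - F₂ := by
    simp only [sub_mul, mul_sub, hG2, hBG.1, hBG.2, hFG.1, hFG.2, hB2, hF₂2, hBF₂z, hF₂Bz]
    abel
  have htH : (G - B - F₂).trace = 0 := by
    rw [trace_sub, trace_sub, htG, htB, htF₂]
    ring
  have hzero := herm_idem_trace_zero hH hH2 htH
  have : G = B + F₂ := by
    rw [sub_sub, sub_eq_zero] at hzero
    exact hzero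
  exact this

lemma core_phi {A B F₁ F₂ F₅ : Matrix (Fin N) (Fin N) ℂ}
    (hA : Aᴴ = A) (hB : Bᴴ = B) (hF₂ : F₂ᴴ = F₂) (hF₅ : F₅ᴴ = F₅)
    (hA2 : A*A = A) (hB2 : B*B = B) (hF₁2 : F₁*F₁ = F₁) (hF₂2 : F₂*F₂ = F₂)
    (hF₅2 : F₅*F₅ = F₅)
    (hAF₁z : A*F₁ = 0) (hF₁Az : F₁*A = 0) (hBF₂z : B*F₂ = 0) (hF₂Bz : F₂*B = 0)
    (hsum : A + F₁ = B + F₂)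
    (hF₂F₅ : F₂*F₅ = 0) (hF₅F₂ : F₅*F₂ = 0) (hF₁F₅ : F₁*F₅ = 0) (hF₅F₁ : F₅*F₁ = 0)
    (hF₁herm : F₁ᴴ = F₁)
    (htA : (A*(F₂+F₅)).trace = A.trace) (htB : (B*(F₁+F₅)).trace = B.trace) :
    A*B = B*A := by
  have hG₂ : (F₂+F₅)ᴴ = F₂+F₅ := by rw [conjTranspose_add, hF₂, hF₅]
  have hG₂2 : (F₂+F₅)*(F₂+F₅) = F₂+F₅ := by
    simp only [mul_add, add_mul, hF₂2, hF₅2, hF₂F₅, hF₅F₂]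
    abel
  obtain ⟨hAG, hGA⟩ := lemB hA hA2 hG₂ hG₂2 htA
  have hG₁ : (F₁+F₅)ᴴ = F₁+F₅ := by rw [conjTranspose_add, hF₁herm, hF₅]
  have hG₁2 : (F₁+F₅)*(F₁+F₅) = F₁+F₅ := by
    simp only [mul_add, add_mul, hF₁2, hF₅2, hF₁F₅, hF₅F₁]
    abel
  obtain ⟨hBG, hGB⟩ := lemB hB hB2 hG₁ hG₁2 htB
  have hF₂eq : F₂ = A + F₁ - B := by rw [hsum]; abel
  have hF₁eq : F₁ = B + F₂ - A := by rw [← hsum]; abel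
  have hAF₂ : A*F₂ = A - A*B := by
    rw [hF₂eq]
    simp only [mul_sub, mul_add, hA2, hAF₁z]
    abel
  have hF₂A : F₂*A = A - B*A := by
    rw [hF₂eq]
    simp only [sub_mul, add_mul, hA2, hF₁Az]
    abel
  have hBF₁ : B*F₁ = B - B*A := by
    rw [hF₁eq]
    simp only [mul_sub, mul_add, hB2, hBF₂z]
    abel
  have hF₁B : F₁*B = B - A*B := by
    rw [hF₁eq]
    simp only [sub_mul, add_mul, hB2, hF₂Bz]
    abel
  have hAF₅ : A*F₅ = A*B := by
    have h9 : (A - A*B) + A*F₅ = A := by rw [← hAF₂, ← mul_add, hAG]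
    calc A*F₅ = ((A - A*B) + A*F₅) - (A - A*B) := by abel
    _ = A - (A - A*B) := by rw [h9]
    _ = A*B := by abel
  have hF₅A : F₅*A = B*A := by
    have h9 : (A - B*A) + F₅*A = A := by rw [← hF₂A, ← add_mul, hGA]
    calc F₅*A = ((A - B*A) + F₅*A) - (A - B*A) := by abel
    _ = A - (A - B*A) := by rw [h9]
    _ = B*A := by abel
  have hBF₅ : B*F₅ = B*A := by
    have h9 : (B - B*A) + B*F₅ = B := by rw [← hBF₁, ← mul_add, hBG]
    calc B*F₅ = ((B - B*A) + B*F₅) - (B - B*A) := by abel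
    _ = B - (B - B*A) := by rw [h9]
    _ = B*A := by abel
  have hF₅B : F₅*B = A*B := by
    have h9 : (B - A*B) + F₅*B = B := by rw [← hF₁B, ← add_mul, hGB]
    calc F₅*B = ((B - A*B) + F₅*B) - (B - A*B) := by abel
    _ = B - (B - A*B) := by rw [h9]
    _ = A*B := by abel
  exact lemC hA hB hA2 hB2 hF₅2 hAF₅ hF₅A hBF₅ hF₅B

lemma exists_sub (M : Matrix (Fin N) (Fin N) ℂ) (hM : M.IsHermitian) (hM2 : M*M = M) :
    ∃ m : ℕ, M.trace = m ∧ ∀ a b : ℕ, a + b ≤ m →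
    ∃ X V : Matrix (Fin N) (Fin N) ℂ, Xᴴ = X ∧ X*X = X ∧ X.trace = a ∧
      Vᴴ = V ∧ V*V = V ∧ V.trace = b ∧ X*V = 0 ∧ V*X = 0 ∧
      M*X = X ∧ X*M = X ∧ M*V = V ∧ V*M = V := by
  classical
  set U : Matrix (Fin N) (Fin N) ℂ := (hM.eigenvectorUnitary : Matrix (Fin N) (Fin N) ℂ) with hU
  have hU1 : Uᴴ * U = 1 := by
    simpa [hU, Matrix.star_eq_conjTranspose] using
      (Matrix.mem_unitaryGroup_iff').mp (hM.eigenvectorUnitary).2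
  have hUU : ∀ Y : Matrix (Fin N) (Fin N) ℂ, Uᴴ * (U * Y) = Y := fun Y => by
    rw [← Matrix.mul_assoc, hU1, Matrix.one_mul]
  set f : Fin N → ℂ := fun i => (RCLike.ofReal (hM.eigenvalues i) : ℂ) with hf
  have hspec : M = U * diagonal f * Uᴴ := by
    exact hM.spectral_theorem.trans rfl
  have hconj : ∀ Z W : Matrix (Fin N) (Fin N) ℂ,
      (U * Z * Uᴴ) * (U * W * Uᴴ) = U * (Z * W) * Uᴴ := by
    intro Z W
    simp only [Matrix.mul_assoc, hUU]
  have key : ∀ Z W : Matrix (Fin N) (Fin N) ℂ, U * Z * Uᴴ = U * W * Uᴴ → Z = W := by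
    intro Z W h
    have h' := congrArg (fun Y => Uᴴ * Y * U) h
    simpa only [Matrix.mul_assoc, hUU, hU1, Matrix.mul_one] using h'
  have hf01 : ∀ i, f i = 0 ∨ f i = 1 := by
    intro i
    have hd : diagonal f * diagonal f = diagonal f := by
      apply key
      rw [← hconj, ← hspec]
      exact hM2
    have : f i * f i = f i := by
      have h2 := congrArg (fun Z : Matrix (Fin N) (Fin N) ℂ => Z i i) hd
      simpa [Matrix.diagonal_mul_diagonal, Matrix.diagonal_apply_eq] using h2
    rcases mul_eq_zero.mp (by ring_nf; linear_combination this : f i * (f i - 1) = 0) with h | h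
    · exact Or.inl h
    · exact Or.inr (by linear_combination h)
  set S0 : Finset (Fin N) := Finset.univ.filter (fun i => f i = 1) with hS0
  have hfS0 : f = fun i => if i ∈ S0 then (1:ℂ) else 0 := by
    funext i
    rcases hf01 i with h | h <;> simp [hS0, h]
  set pr : Finset (Fin N) → Matrix (Fin N) (Fin N) ℂ :=
    fun S => U * diagonal (fun i => if i ∈ S then (1:ℂ) else 0) * Uᴴ with hpr
  have hprmul : ∀ S T, pr S * pr T = pr (S ∩ T) := by
    intro S T
    have hfun : (fun i => (if i ∈ S then (1:ℂ) else 0) * (if i ∈ T then (1:ℂ) else 0))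
        = fun i => if i ∈ S ∩ T then (1:ℂ) else 0 := by
      funext i
      by_cases h1 : i ∈ S <;> by_cases h2 : i ∈ T <;>
        simp [Finset.mem_inter, h1, h2]
    rw [hpr]
    simp only
    rw [hconj, Matrix.diagonal_mul_diagonal, hfun]
  have hprherm : ∀ S, (pr S)ᴴ = pr S := by
    intro S
    rw [hpr]
    simp only
    rw [Matrix.conjTranspose_mul, Matrix.conjTranspose_mul, Matrix.conjTranspose_conjTranspose,
      Matrix.diagonal_conjTranspose]
    rw [Matrix.mul_assoc]
    congr 2
    funext i
    by_cases h1 : i ∈ S <;> simp [h1, Pi.star_def]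
  have hprtr : ∀ S, (pr S).trace = S.card := by
    intro S
    rw [hpr]
    simp only
    rw [Matrix.trace_mul_cycle, hU1, Matrix.one_mul, Matrix.trace_diagonal]
    simp
  have hMpr : M = pr S0 := by rw [hpr]; simp only; rw [← hfS0]; exact hspec
  refine ⟨S0.card, by rw [hMpr, hprtr], ?_⟩
  intro a b hab
  obtain ⟨Sa, hSaS, hSacard⟩ := Finset.exists_subset_card_eq (le_trans (Nat.le_add_right a b) hab)
  have hb : b ≤ (S0 \ Sa).card := by
    rw [Finset.card_sdiff_of_subset hSaS, hSacard]
    omega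
  obtain ⟨Sb, hSbS, hSbcard⟩ := Finset.exists_subset_card_eq hb
  have hSbS0 : Sb ⊆ S0 := hSbS.trans (Finset.sdiff_subset)
  have hdisj : Sa ∩ Sb = ∅ := by
    apply Finset.eq_empty_of_forall_notMem
    intro x hx
    rcases Finset.mem_inter.mp hx with ⟨h1, h2⟩
    exact (Finset.mem_sdiff.mp (hSbS h2)).2 h1
  refine ⟨pr Sa, pr Sb, hprherm _, ?_, ?_, hprherm _, ?_, ?_, ?_, ?_, ?_, ?_, ?_, ?_⟩
  · rw [hprmul, Finset.inter_self]
  · rw [hprtr, hSacard]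
  · rw [hprmul, Finset.inter_self]
  · rw [hprtr, hSbcard]
  · rw [hprmul, hdisj, hpr]; simp
  · rw [hprmul, Finset.inter_comm, hdisj, hpr]; simp
  · rw [hMpr, hprmul, Finset.inter_eq_right.mpr hSaS]
  · rw [hMpr, hprmul, Finset.inter_eq_left.mpr hSaS]
  · rw [hMpr, hprmul, Finset.inter_eq_right.mpr hSbS0]
  · rw [hMpr, hprmul, Finset.inter_eq_left.mpr hSbS0]


lemma buildE {n c : ℕ} (hn2 : 2*c ≤ n) {P Q : Matrix (Fin n) (Fin n) ℂ}
    (hP : MemGrassmann n c P) (hQ : MemGrassmann n c Q) (hcomm : P*Q = Q*P) :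
    ∃ d e : ℕ, d + e = c ∧ (P*Q).trace = (d:ℂ) ∧
    ∃ E₁ E₂ : Matrix (Fin n) (Fin n) ℂ, MemGrassmann n c E₁ ∧ MemGrassmann n c E₂ ∧
      P*E₂ = E₂*P ∧ (P*E₂).trace = (e:ℂ) ∧ (P*E₁).trace = 0 ∧ (Q*E₂).trace = 0 ∧
      (Q*E₁).trace = (e:ℂ) ∧ (E₁*E₂).trace = (d:ℂ) ∧
      (3*c ≤ n + d → ∃ E₅, MemGrassmann n c E₅ ∧ (P*E₅).trace = (d:ℂ) ∧
        (Q*E₅).trace = (d:ℂ) ∧ (E₁*E₅).trace = 0 ∧ (E₂*E₅).trace = 0) := by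
  obtain ⟨hP1', hP2, hPt⟩ := hP
  obtain ⟨hQ1', hQ2, hQt⟩ := hQ
  have hP1 : Pᴴ = P := hP1'
  have hQ1 : Qᴴ = Q := hQ1'
  have hQP : Q*P = P*Q := hcomm.symm
  -- basic word identities
  have hPPQ : P*(P*Q) = P*Q := by rw [← mul_assoc, hP2]
  have hPQP : (P*Q)*P = P*Q := by rw [mul_assoc, hQP, hPPQ]
  have hQPQ : Q*(P*Q) = P*Q := by rw [← mul_assoc, hQP, mul_assoc, hQ2]
  have hPQQ : (P*Q)*Q = P*Q := by rw [mul_assoc, hQ2]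
  have hPQ2 : (P*Q)*(P*Q) = P*Q := by rw [mul_assoc, hQPQ, hPPQ]
  have hPQherm : (P*Q)ᴴ = P*Q := by rw [conjTranspose_mul, hQ1, hP1, hQP]
  -- d := trace of P*Q
  obtain ⟨d, hdt, -⟩ := exists_sub (P*Q) hPQherm hPQ2
  -- Q₁ := Q - P*Q
  have hQ₁herm : (Q - P*Q)ᴴ = Q - P*Q := by rw [conjTranspose_sub, hQ1, hPQherm]
  have hQ₁2 : (Q - P*Q)*(Q - P*Q) = Q - P*Q := by
    simp only [sub_mul, mul_sub, hQ2, hQPQ, hPQQ, hPQ2]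
    abel
  obtain ⟨e, het, -⟩ := exists_sub (Q - P*Q) hQ₁herm hQ₁2
  have hsumtr : (d:ℂ) + (e:ℂ) = (c:ℂ) := by
    rw [← hdt, ← het, trace_sub, hQt]
    ring
  have hde : d + e = c := by exact_mod_cast hsumtr
  -- P₁ := P - P*Q
  have hP₁herm : (P - P*Q)ᴴ = P - P*Q := by rw [conjTranspose_sub, hP1, hPQherm]
  have hP₁2 : (P - P*Q)*(P - P*Q) = P - P*Q := by
    simp only [sub_mul, mul_sub, hP2, hPPQ, hPQP, hPQ2]
    abel
  have htP₁ : (P - P*Q).trace = (e:ℂ) := by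
    rw [trace_sub, hPt, hdt]
    linear_combination -hsumtr
  -- N := 1 - P - Q + P*Q
  have hNherm : (1 - P - Q + P*Q)ᴴ = 1 - P - Q + P*Q := by
    rw [conjTranspose_add, conjTranspose_sub, conjTranspose_sub, conjTranspose_one,
      hP1, hQ1, hPQherm]
  have hPN : P*(1 - P - Q + P*Q) = 0 := by
    simp only [mul_add, mul_sub, mul_one, hP2, hPPQ]
    abel
  have hQN : Q*(1 - P - Q + P*Q) = 0 := by
    simp only [mul_add, mul_sub, mul_one, hQ2, hQPQ, hQP]
    abel
  have hPQN : (P*Q)*(1 - P - Q + P*Q) = 0 := by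
    rw [mul_assoc, hQN, mul_zero]
  have hN2 : (1 - P - Q + P*Q)*(1 - P - Q + P*Q) = 1 - P - Q + P*Q := by
    nth_rewrite 1 [show (1 - P - Q + P*Q : Matrix (Fin n) (Fin n) ℂ)
      = 1 - P - Q + P*Q from rfl]
    calc (1 - P - Q + P*Q)*(1 - P - Q + P*Q)
        = 1*(1 - P - Q + P*Q) - P*(1 - P - Q + P*Q) - Q*(1 - P - Q + P*Q)
          + (P*Q)*(1 - P - Q + P*Q) := by
          simp only [sub_mul, add_mul]
    _ = 1 - P - Q + P*Q := by
          rw [one_mul, hPN, hQN, hPQN]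
          abel
  have htN : (1 - P - Q + P*Q).trace = (n:ℂ) - c - c + d := by
    simp only [trace_add, trace_sub, trace_one, hPt, hQt, hdt, Fintype.card_fin]
  obtain ⟨m, hmt, hsub⟩ := exists_sub (1 - P - Q + P*Q) hNherm hN2
  have hm : m + 2*c = n + d := by
    have hx : ((m + 2*c : ℕ) : ℂ) = ((n + d : ℕ) : ℂ) := by
      push_cast
      rw [← hmt, htN]
      ring
    exact_mod_cast hx
  obtain ⟨X, V, hXh, hX2, htX, hVh, hV2, htV, hXV, hVX, hNX, hXN, hNV, hVN⟩ :=
    hsub d (min e (m - d)) (by omega)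
  -- derived orthogonality
  have hPX : P*X = 0 := by rw [← hNX, ← mul_assoc, hPN, zero_mul]
  have hXP : X*P = 0 := swap_zero hP1 hXh hPX
  have hQX : Q*X = 0 := by rw [← hNX, ← mul_assoc, hQN, zero_mul]
  have hXQ : X*Q = 0 := swap_zero hQ1 hXh hQX
  have hPV : P*V = 0 := by rw [← hNV, ← mul_assoc, hPN, zero_mul]
  have hVP : V*P = 0 := swap_zero hP1 hVh hPV
  have hQV : Q*V = 0 := by rw [← hNV, ← mul_assoc, hQN, zero_mul]
  have hVQ : V*Q = 0 := swap_zero hQ1 hVh hQV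
  have hPQX : (P*Q)*X = 0 := by rw [mul_assoc, hQX, mul_zero]
  have hXPQ : X*(P*Q) = 0 := swap_zero hPQherm hXh hPQX
  have hPQV : (P*Q)*V = 0 := by rw [mul_assoc, hQV, mul_zero]
  have hVPQ : V*(P*Q) = 0 := swap_zero hPQherm hVh hPQV
  -- E₁ := (Q - P*Q) + X , E₂ := (P - P*Q) + X
  have hQ₁X : (Q - P*Q)*X = 0 := by rw [sub_mul, hQX, hPQX, sub_zero]
  have hXQ₁ : X*(Q - P*Q) = 0 := by rw [mul_sub, hXQ, hXPQ, sub_zero]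
  have hP₁X : (P - P*Q)*X = 0 := by rw [sub_mul, hPX, hPQX, sub_zero]
  have hXP₁ : X*(P - P*Q) = 0 := by rw [mul_sub, hXP, hXPQ, sub_zero]
  have hce : (e:ℂ) + (d:ℂ) = (c:ℂ) := by linear_combination hsumtr
  have hE₁mem : MemGrassmann n c ((Q - P*Q) + X) := by
    refine ⟨?_, ?_, ?_⟩
    · show ((Q - P*Q) + X)ᴴ = (Q - P*Q) + X
      rw [conjTranspose_add, hQ₁herm, hXh]
    · simp only [add_mul, mul_add, hQ₁2, hQ₁X, hXQ₁, hX2]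
      abel
    · rw [trace_add, het, htX, hce]
  have hE₂mem : MemGrassmann n c ((P - P*Q) + X) := by
    refine ⟨?_, ?_, ?_⟩
    · show ((P - P*Q) + X)ᴴ = (P - P*Q) + X
      rw [conjTranspose_add, hP₁herm, hXh]
    · simp only [add_mul, mul_add, hP₁2, hP₁X, hXP₁, hX2]
      abel
    · rw [trace_add, htP₁, htX, hce]
  have hPE₂ : P*((P - P*Q) + X) = P - P*Q := by
    rw [mul_add, mul_sub, hP2, hPPQ, hPX, add_zero]
  have hE₂P : ((P - P*Q) + X)*P = P - P*Q := by
    rw [add_mul, sub_mul, hP2, hPQP, hXP, add_zero]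
  have hPE₁ : P*((Q - P*Q) + X) = 0 := by
    rw [mul_add, mul_sub, hPPQ, hPX, add_zero, sub_self]
  have hQE₂ : Q*((P - P*Q) + X) = 0 := by
    rw [mul_add, mul_sub, hQP, hQPQ, hQX, add_zero, sub_self]
  have hQE₁ : Q*((Q - P*Q) + X) = Q - P*Q := by
    rw [mul_add, mul_sub, hQ2, hQPQ, hQX, add_zero]
  have hQ₁P₁ : (Q - P*Q)*(P - P*Q) = 0 := by
    simp only [sub_mul, mul_sub, hQP, hQPQ, hPQP, hPQ2]
    abel
  have hE₁E₂ : ((Q - P*Q) + X)*((P - P*Q) + X) = X := by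
    simp only [add_mul, mul_add, hQ₁P₁, hQ₁X, hXP₁, hX2]
    abel
  refine ⟨d, e, hde, hdt, (Q - P*Q) + X, (P - P*Q) + X, hE₁mem, hE₂mem, ?_, ?_, ?_, ?_, ?_, ?_, ?_⟩
  · rw [hPE₂, hE₂P]
  · rw [hPE₂, htP₁]
  · rw [hPE₁, trace_zero]
  · rw [hQE₂, trace_zero]
  · rw [hQE₁, het]
  · rw [hE₁E₂, htX]
  · -- the E₅ part
    intro hcase
    have hminV : min e (m - d) = e := by omega
    rw [hminV] at htV
    have hQ₁PQ : (Q - P*Q)*(P*Q) = 0 := by rw [sub_mul, hQPQ, hPQ2, sub_self]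
    have hP₁PQ : (P - P*Q)*(P*Q) = 0 := by rw [sub_mul, hPPQ, hPQ2, sub_self]
    have hQ₁V : (Q - P*Q)*V = 0 := by rw [sub_mul, hQV, hPQV, sub_zero]
    have hP₁V : (P - P*Q)*V = 0 := by rw [sub_mul, hPV, hPQV, sub_zero]
    have hE₅mem : MemGrassmann n c (P*Q + V) := by
      refine ⟨?_, ?_, ?_⟩
      · show (P*Q + V)ᴴ = P*Q + V
        rw [conjTranspose_add, hPQherm, hVh]
      · simp only [add_mul, mul_add, hPQ2, hPQV, hVPQ, hV2]
        abel
      · rw [trace_add, hdt, htV]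
        exact_mod_cast congrArg (Nat.cast : ℕ → ℂ) hde
    refine ⟨P*Q + V, hE₅mem, ?_, ?_, ?_, ?_⟩
    · rw [mul_add, hPPQ, hPV, add_zero, hdt]
    · rw [mul_add, hQPQ, hQV, add_zero, hdt]
    · rw [add_mul, mul_add, mul_add, hQ₁PQ, hQ₁V, hXPQ, hXV]
      simp
    · rw [add_mul, mul_add, mul_add, hP₁PQ, hP₁V, hXPQ, hXV]
      simp


lemma core {n c : ℕ} (h5c : 5 * c ≤ 2 * n)
    (φ : Matrix (Fin n) (Fin n) ℂ → Matrix (Fin n) (Fin n) ℂ)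
    (hmap : ∀ P, MemGrassmann n c P → MemGrassmann n c (φ P))
    (hpres : ∀ P Q, MemGrassmann n c P → MemGrassmann n c Q →
      (φ P * φ Q).trace = (P * Q).trace)
    (P Q : Matrix (Fin n) (Fin n) ℂ)
    (hP : MemGrassmann n c P) (hQ : MemGrassmann n c Q)
    (hcomm : P * Q = Q * P) (d : ℕ) (hd : (P*Q).trace = (d:ℂ)) (hn : 3*c ≤ n + d) :
    φ P * φ Q = φ Q * φ P := by
  obtain ⟨d', e, hde, hdt, E₁, E₂, hE₁, hE₂, hPE₂c, htPE₂, htPE₁, htQE₂, htQE₁, htE₁E₂, hE₅ex⟩ :=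
    buildE (by omega) hP hQ hcomm
  have hdd : d' = d := by
    have hx : ((d':ℕ):ℂ) = ((d:ℕ):ℂ) := by rw [← hdt, hd]
    exact_mod_cast hx
  rw [hdd] at hdt htE₁E₂ hE₅ex hde
  obtain ⟨E₅, hE₅, htPE₅, htQE₅, htE₁E₅, htE₂E₅⟩ := hE₅ex (by omega)
  obtain ⟨hA1', hA2, hAt⟩ := hmap P hP
  obtain ⟨hB1', hB2, hBt⟩ := hmap Q hQ
  obtain ⟨hF₁1', hF₁2, hF₁t⟩ := hmap E₁ hE₁
  obtain ⟨hF₂1', hF₂2, hF₂t⟩ := hmap E₂ hE₂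
  obtain ⟨hF₅1', hF₅2, hF₅t⟩ := hmap E₅ hE₅
  have hA1 : (φ P)ᴴ = φ P := hA1'
  have hB1 : (φ Q)ᴴ = φ Q := hB1'
  have hF₁1 : (φ E₁)ᴴ = φ E₁ := hF₁1'
  have hF₂1 : (φ E₂)ᴴ = φ E₂ := hF₂1'
  have hF₅1 : (φ E₅)ᴴ = φ E₅ := hF₅1'
  have tAB : (φ P * φ Q).trace = (d:ℂ) := by rw [hpres P Q hP hQ, hd]
  have tAF₁ : (φ P * φ E₁).trace = 0 := by rw [hpres P E₁ hP hE₁, htPE₁]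
  have tBF₂ : (φ Q * φ E₂).trace = 0 := by rw [hpres Q E₂ hQ hE₂, htQE₂]
  have tBF₁ : (φ Q * φ E₁).trace = (e:ℂ) := by rw [hpres Q E₁ hQ hE₁, htQE₁]
  have tAF₂ : (φ P * φ E₂).trace = (e:ℂ) := by rw [hpres P E₂ hP hE₂, htPE₂]
  have tF₁F₂ : (φ E₁ * φ E₂).trace = (d:ℂ) := by rw [hpres E₁ E₂ hE₁ hE₂, htE₁E₂]
  have tAF₅ : (φ P * φ E₅).trace = (d:ℂ) := by rw [hpres P E₅ hP hE₅, htPE₅]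
  have tBF₅ : (φ Q * φ E₅).trace = (d:ℂ) := by rw [hpres Q E₅ hQ hE₅, htQE₅]
  have tF₁F₅ : (φ E₁ * φ E₅).trace = 0 := by rw [hpres E₁ E₅ hE₁ hE₅, htE₁E₅]
  have tF₂F₅ : (φ E₂ * φ E₅).trace = 0 := by rw [hpres E₂ E₅ hE₂ hE₅, htE₂E₅]
  have huv : (d:ℂ) + (e:ℂ) = (c:ℂ) := by exact_mod_cast hde
  have hsum := sum_identity hA1 hB1 hF₁1 hF₂1 hA2 hB2 hF₁2 hF₂2 hAt hBt hF₁t hF₂t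
    tAF₁ tBF₂ tAB tBF₁ tAF₂ tF₁F₂ huv
  obtain ⟨hAF₁z, hF₁Az⟩ := lemA hA1 hA2 hF₁1 hF₁2 tAF₁
  obtain ⟨hBF₂z, hF₂Bz⟩ := lemA hB1 hB2 hF₂1 hF₂2 tBF₂
  obtain ⟨hF₂F₅z, hF₅F₂z⟩ := lemA hF₂1 hF₂2 hF₅1 hF₅2 tF₂F₅
  obtain ⟨hF₁F₅z, hF₅F₁z⟩ := lemA hF₁1 hF₁2 hF₅1 hF₅2 tF₁F₅
  apply core_phi hA1 hB1 hF₂1 hF₅1 hA2 hB2 hF₁2 hF₂2 hF₅2 hAF₁z hF₁Az hBF₂z hF₂Bz hsum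
    hF₂F₅z hF₅F₂z hF₁F₅z hF₅F₁z hF₁1
  · rw [mul_add, trace_add, tAF₂, tAF₅, hAt]
    linear_combination huv
  · rw [mul_add, trace_add, tBF₁, tBF₅, hBt]
    linear_combination huv

end Stmt13Aux

/-- If `5c/2 ≤ n`, a transition probability preserving map on `𝒫_c` preserves
commutativity. -/
theorem stmt13 {n c : ℕ} (hc0 : 0 < c) (h5c : 5 * c ≤ 2 * n)
    (φ : Matrix (Fin n) (Fin n) ℂ → Matrix (Fin n) (Fin n) ℂ)
    (hmap : ∀ P, MemGrassmann n c P → MemGrassmann n c (φ P))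
    (hpres : ∀ P Q, MemGrassmann n c P → MemGrassmann n c Q →
      (φ P * φ Q).trace = (P * Q).trace)
    (P Q : Matrix (Fin n) (Fin n) ℂ)
    (hP : MemGrassmann n c P) (hQ : MemGrassmann n c Q)
    (hcomm : P * Q = Q * P) :
    φ P * φ Q = φ Q * φ P := by
  open Stmt13Aux Matrix in
  obtain ⟨d, e, hde, hdt, E₁, E₂, hE₁, hE₂, hPE₂c, htPE₂, htPE₁, htQE₂, htQE₁, htE₁E₂, -⟩ :=
    buildE (by omega) hP hQ hcomm
  by_cases hcase : 3*c ≤ n + d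
  · exact Stmt13Aux.core h5c φ hmap hpres P Q hP hQ hcomm d hdt hcase
  · have hAF₂comm : φ P * φ E₂ = φ E₂ * φ P :=
      Stmt13Aux.core h5c φ hmap hpres P E₂ hP hE₂ hPE₂c e htPE₂ (by omega)
    obtain ⟨hA1', hA2, hAt⟩ := hmap P hP
    obtain ⟨hB1', hB2, hBt⟩ := hmap Q hQ
    obtain ⟨hF₁1', hF₁2, hF₁t⟩ := hmap E₁ hE₁
    obtain ⟨hF₂1', hF₂2, hF₂t⟩ := hmap E₂ hE₂
    have hA1 : (φ P)ᴴ = φ P := hA1'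
    have hB1 : (φ Q)ᴴ = φ Q := hB1'
    have hF₁1 : (φ E₁)ᴴ = φ E₁ := hF₁1'
    have hF₂1 : (φ E₂)ᴴ = φ E₂ := hF₂1'
    have tAB : (φ P * φ Q).trace = (d:ℂ) := by rw [hpres P Q hP hQ, hdt]
    have tAF₁ : (φ P * φ E₁).trace = 0 := by rw [hpres P E₁ hP hE₁, htPE₁]
    have tBF₂ : (φ Q * φ E₂).trace = 0 := by rw [hpres Q E₂ hQ hE₂, htQE₂]
    have tBF₁ : (φ Q * φ E₁).trace = (e:ℂ) := by rw [hpres Q E₁ hQ hE₁, htQE₁]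
    have tAF₂ : (φ P * φ E₂).trace = (e:ℂ) := by rw [hpres P E₂ hP hE₂, htPE₂]
    have tF₁F₂ : (φ E₁ * φ E₂).trace = (d:ℂ) := by rw [hpres E₁ E₂ hE₁ hE₂, htE₁E₂]
    have huv : (d:ℂ) + (e:ℂ) = (c:ℂ) := by exact_mod_cast hde
    have hsum := Stmt13Aux.sum_identity hA1 hB1 hF₁1 hF₂1 hA2 hB2 hF₁2 hF₂2 hAt hBt hF₁t hF₂t
      tAF₁ tBF₂ tAB tBF₁ tAF₂ tF₁F₂ huv
    obtain ⟨hAF₁z, hF₁Az⟩ := Stmt13Aux.lemA hA1 hA2 hF₁1 hF₁2 tAF₁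
    have hF₂eq : φ E₂ = φ P + φ E₁ - φ Q := by rw [hsum]; abel
    have h1 : φ P * φ E₂ = φ P - φ P * φ Q := by
      rw [hF₂eq]
      simp only [Matrix.mul_sub, Matrix.mul_add, hA2, hAF₁z]
      abel
    have h2 : φ E₂ * φ P = φ P - φ Q * φ P := by
      rw [hF₂eq]
      simp only [Matrix.sub_mul, Matrix.add_mul, hA2, hF₁Az]
      abel
    have hfin := hAF₂comm
    rw [h1, h2] at hfin
    exact sub_right_inj.mp hfin
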